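/- Let p be a prime, A ⊆ F_p a nonempty set with |A + A| ≤ K·|A| for some real K ≥ 1, and let d ≥ 2 be an integer. Then there exist an element a_* ∈ A and a set W ⊆ A − a_* with |W| ≥ |A| / K^{3d−3} such that j·W ⊆ A − A for every integer j ∈ {1, 2, …, d} (where j acts by multiplication by the image of j in F_p). -/

import Mathlib

open Finset Pointwise

theorem stmt11 (p : ℕ) [Fact p.Prime] (A : Finset (ZMod p)) (K : ℝ) (d : ℕ)
    (hA : A.Nonempty) (hK : 1 ≤ K)
    (hdouble : ((A + A).card : ℝ) ≤ K * A.card) (hd : 2 ≤ d) :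
    ∃ astar ∈ A, ∃ W : Finset (ZMod p),
      W ⊆ A.image (fun a => a - astar) ∧
      (A.card : ℝ) / K ^ (3 * d - 3) ≤ (W.card : ℝ) ∧
      ∀ j ∈ Finset.Icc 1 d, W.image (fun w => (j : ZMod p) * w) ⊆ A - A := by
  classical
  obtain ⟨n, rfl⟩ : ∃ n, d = n + 1 := ⟨d - 1, by omega⟩
  have hα : (0:ℝ) < A.card := by exact_mod_cast card_pos.2 hA
  have hK0 : (0:ℝ) < K := lt_of_lt_of_le one_pos hK
  -- Plünnecke-Ruzsa: |A - A - A| ≤ K^3 |A|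
  have hplun : ((A - A - A).card : ℝ) ≤ K ^ 3 * A.card := by
    have h := Finset.pluennecke_ruzsa_inequality_nsmul_sub_nsmul_add hA A 1 2
    have h1 : (((1 • A - 2 • A : Finset (ZMod p)).card : ℚ≥0) : ℝ)
        ≤ (((((A + A).card : ℚ≥0) / (A.card : ℚ≥0)) ^ (1 + 2) * (A.card : ℚ≥0) : ℚ≥0) : ℝ) := by
      exact_mod_cast h
    have h2 : ((1 • A - 2 • A : Finset (ZMod p)).card : ℝ)
        ≤ (((A + A).card : ℝ) / A.card) ^ (1 + 2) * A.card := by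
      push_cast at h1
      exact_mod_cast h1
    rw [one_nsmul, two_nsmul, sub_add_eq_sub_sub] at h2
    calc ((A - A - A).card : ℝ) ≤ (((A + A).card : ℝ) / A.card) ^ (1 + 2) * A.card := h2
      _ ≤ K ^ 3 * A.card := by
          have h3 : ((A + A).card : ℝ) / A.card ≤ K := by
            rw [div_le_iff₀ hα]; exact hdouble
          have h4 : (0:ℝ) ≤ ((A + A).card : ℝ) / A.card := by positivity
          gcongr

  -- setup
  set T : Finset (ZMod p) := A - A - A with hT
  set B : Finset (Fin (n+1) → ZMod p) := Fintype.piFinset (fun _ => A) with hB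
  set C : Finset (Fin n → ZMod p) := Fintype.piFinset (fun _ => T) with hC
  set Ψ : (Fin (n+1) → ZMod p) → (Fin n → ZMod p) :=
    (fun a k => a k.succ - a k.castSucc - a 0) with hΨ
  have hmaps : ∀ a ∈ B, Ψ a ∈ C := by
    intro a ha
    rw [hB, Fintype.mem_piFinset] at ha
    rw [hC, Fintype.mem_piFinset]
    intro k
    exact sub_mem_sub (sub_mem_sub (ha _) (ha _)) (ha _)
  -- key structural consequence of Ψ a = Ψ b
  have key : ∀ a b : Fin (n+1) → ZMod p, Ψ a = Ψ b →
      ∀ k : Fin (n+1), b k - a k = (((k : ℕ) + 1 : ℕ) : ZMod p) * (b 0 - a 0) := by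
    intro a b hab k
    induction k using Fin.induction with
    | zero => simp
    | succ k ih =>
      have h1 : a k.succ - a k.castSucc - a 0 = b k.succ - b k.castSucc - b 0 :=
        congrFun hab k
      rw [Fin.coe_castSucc] at ih
      rw [Fin.val_succ]
      push_cast at ih ⊢
      linear_combination ih - h1
  set P : Finset (ZMod p × ZMod p) := (A ×ˢ A).filter
      (fun q => ∀ j ∈ Finset.Icc 1 (n+1), (j : ZMod p) * (q.2 - q.1) ∈ A - A) with hP
  set Q : Finset ((Fin (n+1) → ZMod p) × (Fin (n+1) → ZMod p)) :=
    (B ×ˢ B).filter (fun ab => Ψ ab.1 = Ψ ab.2) with hQ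
  -- Step 1 : Cauchy-Schwarz : |B|^2 ≤ |C| * |Q|
  have step1 : ((B.card : ℝ))^2 ≤ (C.card : ℝ) * Q.card := by
    have hBsum : B.card = ∑ y ∈ C, (B.filter (fun a => Ψ a = y)).card :=
      card_eq_sum_card_fiberwise hmaps
    have hQsum : Q.card = ∑ y ∈ C, ((B.filter (fun a => Ψ a = y)).card)^2 := by
      have hQmaps : ∀ ab ∈ Q, Ψ ab.1 ∈ C := by
        intro ab hab
        rw [hQ, mem_filter, mem_product] at hab
        exact hmaps _ hab.1.1
      rw [card_eq_sum_card_fiberwise hQmaps]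
      refine Finset.sum_congr rfl (fun y _ => ?_)
      have : Q.filter (fun ab => Ψ ab.1 = y)
          = (B.filter (fun a => Ψ a = y)) ×ˢ (B.filter (fun a => Ψ a = y)) := by
        ext ⟨a, b⟩
        simp only [hQ, mem_filter, mem_product]
        constructor
        · rintro ⟨⟨⟨ha, hb⟩, he⟩, hy⟩
          exact ⟨⟨ha, hy⟩, ⟨hb, he ▸ hy⟩⟩
        · rintro ⟨⟨ha, hy⟩, ⟨hb, hy'⟩⟩
          exact ⟨⟨⟨ha, hb⟩, hy.trans hy'.symm⟩, hy⟩
      rw [this, card_product, sq]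
    have := sq_sum_le_card_mul_sum_sq
      (s := C) (f := fun y => ((B.filter (fun a => Ψ a = y)).card : ℝ))
    rw [hBsum, hQsum]
    push_cast
    exact this
  -- Step 2 : |Q| ≤ |P| * |A|^n
  have step2 : (Q.card : ℝ) ≤ (P.card : ℝ) * (A.card : ℝ)^n := by
    have hle : Q.card ≤ (P ×ˢ (Fintype.piFinset (fun _ : Fin n => A))).card := by
      apply Finset.card_le_card_of_injOn
        (fun ab => ((ab.1 0, ab.2 0), fun k : Fin n => ab.1 k.succ))
      · rintro ⟨a, b⟩ hab
        rw [hQ, mem_coe, mem_filter, mem_product] at hab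
        obtain ⟨⟨haB, hbB⟩, habΨ⟩ := hab
        rw [hB, Fintype.mem_piFinset] at haB hbB
        rw [mem_coe, mem_product]
        constructor
        · rw [hP, mem_filter, mem_product]
          refine ⟨⟨haB 0, hbB 0⟩, ?_⟩
          intro j hj
          rw [Finset.mem_Icc] at hj
          set k : Fin (n+1) := ⟨j - 1, by omega⟩ with hk
          have hkey := key a b habΨ k
          have hjk : ((k : ℕ) + 1 : ℕ) = j := by rw [hk]; simp; omega
          rw [hjk] at hkey
          rw [← hkey]
          exact sub_mem_sub (hbB k) (haB k)
        · rw [Fintype.mem_piFinset]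
          intro k
          exact haB k.succ
      · rintro ⟨a, b⟩ hab ⟨a', b'⟩ hab' heq
        simp only [Prod.mk.injEq] at heq
        obtain ⟨⟨ha0, hb0⟩, hsucc⟩ := heq
        rw [hQ, mem_coe, mem_filter] at hab hab'
        have ha : a = a' := by
          funext k
          induction k using Fin.cases with
          | zero => exact ha0
          | succ k => exact congrFun hsucc k
        have hb : b = b' := by
          funext k
          have h1 := key a b hab.2 k
          have h2 := key a' b' hab'.2 k
          have h3 : b k - a k = b' k - a' k := by
            rw [h1, h2, ha0, hb0]
          calc b k = (b k - a k) + a k := by ring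
            _ = (b' k - a' k) + a' k := by rw [h3, ha]
            _ = b' k := by ring
        rw [Prod.mk.injEq]
        exact ⟨ha, hb⟩
    calc (Q.card : ℝ) ≤ ((P ×ˢ (Fintype.piFinset (fun _ : Fin n => A))).card : ℝ) := by
          exact_mod_cast hle
      _ = (P.card : ℝ) * (A.card : ℝ)^n := by
          rw [card_product, Fintype.card_piFinset]
          push_cast
          rw [Finset.prod_const, Finset.card_univ, Fintype.card_fin]
  -- Step 3 : P fiberwise over first coordinate
  set cnt : ZMod p → ℕ := fun astar =>
    (A.filter (fun b => ∀ j ∈ Finset.Icc 1 (n+1), (j : ZMod p) * (b - astar) ∈ A - A)).card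
    with hcnt
  have step3 : P.card = ∑ a ∈ A, cnt a := by
    have hPmaps : ∀ q ∈ P, q.1 ∈ A := by
      intro q hq
      rw [hP, mem_filter, mem_product] at hq
      exact hq.1.1
    rw [card_eq_sum_card_fiberwise hPmaps]
    refine Finset.sum_congr rfl (fun a ha => ?_)
    rw [hcnt]
    apply Finset.card_bij (fun q _ => q.2)
    · intro q hq
      rw [mem_filter] at hq ⊢
      obtain ⟨hq1, hq2⟩ := hq
      rw [hP, mem_filter, mem_product] at hq1
      refine ⟨hq1.1.2, ?_⟩
      intro j hj
      rw [← hq2]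
      exact hq1.2 j hj
    · rintro ⟨x1, x2⟩ h1 ⟨y1, y2⟩ h2 heq
      rw [mem_filter] at h1 h2
      simp only at heq
      rw [Prod.mk.injEq]
      exact ⟨h1.2.trans h2.2.symm, heq⟩
    · intro b hb
      rw [mem_filter] at hb
      refine ⟨(a, b), ?_, rfl⟩
      rw [mem_filter]
      refine ⟨?_, rfl⟩
      rw [hP, mem_filter]
      refine ⟨?_, hb.2⟩
      rw [mem_product]
      exact ⟨ha, hb.1⟩
  -- Step 4 : pigeonhole
  obtain ⟨astar, hastar, hpig⟩ : ∃ a ∈ A, P.card ≤ A.card * cnt a := by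
    apply Finset.exists_le_of_sum_le hA
    rw [← Finset.mul_sum, ← step3, Finset.sum_const, smul_eq_mul]
  -- Step 5 : real arithmetic
  have hcnt_lb : (A.card : ℝ) / K ^ (3 * n) ≤ (cnt astar : ℝ) := by
    have hTle : (C.card : ℝ) ≤ (K^3 * A.card)^n := by
      rw [hC, Fintype.card_piFinset]
      push_cast
      rw [Finset.prod_const, Finset.card_univ, Fintype.card_fin]
      exact pow_le_pow_left₀ (by positivity) hplun n
    have hBcard : (B.card : ℝ) = (A.card : ℝ)^(n+1) := by
      rw [hB, Fintype.card_piFinset]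
      push_cast
      rw [Finset.prod_const, Finset.card_univ, Fintype.card_fin]
    have hPc : (P.card : ℝ) ≤ (A.card : ℝ) * cnt astar := by exact_mod_cast hpig
    have chain : ((A.card : ℝ))^(n+1) * (A.card : ℝ)^(n+1)
        ≤ (K^3 * A.card)^n * ((A.card : ℝ) * cnt astar * (A.card : ℝ)^n) := by
      calc ((A.card : ℝ))^(n+1) * (A.card : ℝ)^(n+1) = ((B.card : ℝ))^2 := by
            rw [hBcard]; ring
        _ ≤ (C.card : ℝ) * Q.card := step1
        _ ≤ (C.card : ℝ) * ((P.card : ℝ) * (A.card : ℝ)^n) := by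
            apply mul_le_mul_of_nonneg_left step2 (by positivity)
        _ ≤ (K^3 * A.card)^n * ((A.card : ℝ) * cnt astar * (A.card : ℝ)^n) := by
            apply mul_le_mul hTle ?_ (by positivity) (by positivity)
            exact mul_le_mul_of_nonneg_right hPc (by positivity)
      -- done
    rw [div_le_iff₀ (by positivity)]
    have hpow : (0:ℝ) < (A.card : ℝ)^n * (A.card : ℝ)^n * (A.card : ℝ) := by positivity
    rw [← mul_le_mul_iff_of_pos_right hpow]
    calc (A.card : ℝ) * ((A.card : ℝ)^n * (A.card : ℝ)^n * (A.card : ℝ))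
        = ((A.card : ℝ))^(n+1) * (A.card : ℝ)^(n+1) := by ring
      _ ≤ (K^3 * A.card)^n * ((A.card : ℝ) * cnt astar * (A.card : ℝ)^n) := chain
      _ = (cnt astar : ℝ) * K^(3*n) * ((A.card : ℝ)^n * (A.card : ℝ)^n * (A.card : ℝ)) := by
          rw [mul_pow, ← pow_mul]
          ring
  -- Step 6 : assemble W
  refine ⟨astar, hastar,
    (A.filter (fun b => ∀ j ∈ Finset.Icc 1 (n+1), (j : ZMod p) * (b - astar) ∈ A - A)).image
      (fun b => b - astar), ?_, ?_, ?_⟩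
  · exact Finset.image_subset_image (Finset.filter_subset _ _)
  · have : ((A.filter (fun b => ∀ j ∈ Finset.Icc 1 (n+1),
        (j : ZMod p) * (b - astar) ∈ A - A)).image (fun b => b - astar)).card = cnt astar := by
      rw [hcnt]
      exact Finset.card_image_of_injective _ sub_left_injective
    rw [this]
    have h33 : 3 * (n+1) - 3 = 3 * n := by omega
    rw [h33]
    exact hcnt_lb
  · intro j hj
    intro x hx
    rw [Finset.mem_image] at hx
    obtain ⟨w, hw, hwx⟩ := hx
    rw [Finset.mem_image] at hw
    obtain ⟨b, hb, hbw⟩ := hw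
    rw [mem_filter] at hb
    rw [← hwx, ← hbw]
    exact hb.2 j hj
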